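/- Let A and B be n×n complex matrices. Then the derivative at t = 0 of the map t ↦ exp(A + tB) equals ∫₀¹ exp(λA) · B · exp((1−λ)A) dλ. -/

import Mathlib

open Matrix

open NormedSpace in
/-- Duhamel-type derivative formula in a general complete normed `ℂ`-algebra. -/
theorem aux_hasDerivAt_exp_integral {𝔸 : Type*} [NormedRing 𝔸] [NormedAlgebra ℂ 𝔸]
    [CompleteSpace 𝔸] (A B : 𝔸) :
    HasDerivAt (fun t : ℝ => exp (A + t • B))
      (∫ l in (0:ℝ)..1, exp (l • A) * B * exp ((1 - l) • A)) 0 := by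
  letI : NormedAlgebra ℚ 𝔸 := .restrictScalars ℚ ℂ 𝔸
  have hexp : ∀ (M : 𝔸) (s : ℝ), HasDerivAt (fun u : ℝ => exp (u • M))
      (exp (s • M) * M) s := by
    intro M s
    exact hasDerivAt_exp_smul_const M s
  have key : ∀ M : 𝔸, exp M - exp A
      = ∫ l in (0:ℝ)..1, exp (l • M) * (M - A) * exp ((1 - l) • A) := by
    intro M
    have h : ∀ l ∈ Set.uIcc (0:ℝ) 1,
        HasDerivAt (fun l : ℝ => exp (l • M) * exp ((1 - l) • A))
          (exp (l • M) * (M - A) * exp ((1 - l) • A)) l := by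
      intro l _
      have h2 : HasDerivAt (fun l : ℝ => exp ((1 - l) • A))
          (-(exp ((1 - l) • A) * A)) l := by
        have := (hexp A (1 - l)).scomp l ((hasDerivAt_const l (1:ℝ)).sub (hasDerivAt_id l))
        simpa [Function.comp_def] using this
      have hmul := (hexp M l).mul h2
      convert hmul using 1
      · rfl
      have hc : Commute (exp ((1 - l) • A)) A :=
        ((Commute.refl A).smul_left ((1 - l : ℝ))).exp_left
      rw [hc.eq]
      noncomm_ring
    have hcont : IntervalIntegrable
        (fun l : ℝ => exp (l • M) * (M - A) * exp ((1 - l) • A)) MeasureTheory.volume 0 1 := by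
      apply Continuous.intervalIntegrable
      exact ((exp_continuous.comp (continuous_id.smul continuous_const)).mul
        continuous_const).mul
        (exp_continuous.comp ((continuous_const.sub continuous_id).smul continuous_const))
    have := intervalIntegral.integral_eq_sub_of_hasDerivAt h hcont
    rw [this]
    simp
  set g : ℝ → 𝔸 := fun t => ∫ l in (0:ℝ)..1,
    exp (l • (A + t • B)) * B * exp ((1 - l) • A) with hgdef
  have hg : Continuous g := by
    apply intervalIntegral.continuous_parametric_intervalIntegral_of_continuous'
      (f := fun t l => exp (l • (A + t • B)) * B * exp ((1 - l) • A))
    have : Continuous fun p : ℝ × ℝ =>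
        exp (p.2 • (A + p.1 • B)) * B * exp ((1 - p.2) • A) :=
      ((exp_continuous.comp (continuous_snd.smul
          (continuous_const.add (continuous_fst.smul continuous_const)))).mul
        continuous_const).mul
        (exp_continuous.comp ((continuous_const.sub continuous_snd).smul continuous_const))
    exact this
  have hdiff : ∀ t : ℝ, exp (A + t • B) - exp A = t • g t := by
    intro t
    rw [key (A + t • B), hgdef, ← intervalIntegral.integral_smul]
    congr 1
    funext l
    rw [add_sub_cancel_left, mul_smul_comm, smul_mul_assoc]
  have h0 : g 0 = ∫ l in (0:ℝ)..1, exp (l • A) * B * exp ((1 - l) • A) := by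
    simp [hgdef]
  rw [hasDerivAt_iff_tendsto_slope, ← h0]
  have htend : Filter.Tendsto g (nhdsWithin 0 {(0:ℝ)}ᶜ) (nhds (g 0)) :=
    (hg.tendsto 0).mono_left nhdsWithin_le_nhds
  apply htend.congr'
  filter_upwards [self_mem_nhdsWithin] with t ht
  have ht' : (t : ℝ) ≠ 0 := ht
  rw [slope_def_module, sub_zero]
  have : exp (A + (0:ℝ) • B) = exp A := by simp
  rw [this, hdiff t, smul_smul, inv_mul_cancel₀ ht', one_smul]

/-- For `n×n` complex matrices `A, B`, the entrywise derivative at `t = 0` of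
`t ↦ exp(A + tB)` equals `∫₀¹ exp(λA)·B·exp((1−λ)A) dλ`. -/
theorem deriv_matrix_exp_eq_integral (n : ℕ)
    (A B : Matrix (Fin n) (Fin n) ℂ) :
    ∀ i j : Fin n,
      HasDerivAt (fun t : ℝ => NormedSpace.exp (A + (t : ℂ) • B) i j)
        (∫ l in (0:ℝ)..1,
          (NormedSpace.exp ((l : ℂ) • A) * B *
            NormedSpace.exp ((((1 - l : ℝ) : ℂ)) • A)) i j)
        0 := by
  intro i j
  letI : NormedRing (Matrix (Fin n) (Fin n) ℂ) := Matrix.linftyOpNormedRing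
  letI : NormedAlgebra ℂ (Matrix (Fin n) (Fin n) ℂ) := Matrix.linftyOpNormedAlgebra
  letI : CompleteSpace (Matrix (Fin n) (Fin n) ℂ) := FiniteDimensional.complete ℂ _
  have H := aux_hasDerivAt_exp_integral A B
  -- the entry evaluation as a continuous linear map
  let L : Matrix (Fin n) (Fin n) ℂ →L[ℝ] ℂ :=
    LinearMap.toContinuousLinearMap
      { toFun := fun M => M i j
        map_add' := fun _ _ => rfl
        map_smul' := fun _ _ => rfl }
  have hL := L.hasFDerivAt.comp_hasDerivAt 0 H
  letI : ENormedAddMonoid (Matrix (Fin n) (Fin n) ℂ) :=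
    NormedAddCommGroup.toENormedAddCommMonoid.toENormedAddMonoid
  have hInt : IntervalIntegrable
      (fun l : ℝ => NormedSpace.exp (l • A) * B * NormedSpace.exp ((1 - l) • A))
      MeasureTheory.volume 0 1 := by
    apply Continuous.intervalIntegrable
    letI : NormedAlgebra ℚ (Matrix (Fin n) (Fin n) ℂ) := .restrictScalars ℚ ℂ _
    exact ((NormedSpace.exp_continuous.comp (continuous_id.smul continuous_const)).mul
      continuous_const).mul
      (NormedSpace.exp_continuous.comp ((continuous_const.sub continuous_id).smul
        continuous_const))
  erw [← L.intervalIntegral_comp_comm hInt] at hL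
  convert hL using 2
  all_goals rfl
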